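/- Full double robustness of AIPW: define τ̂(μ₁, μ₀, ê) = E[μ₁(X) − μ₀(X)] + E[Z(Y − μ₁(X))/ê(X)] − E[(1−Z)(Y − μ₀(X))/(1−ê(X))]. If either (i) ê = e (the true propensity) with 0 < e(x) < 1, or (ii) μ₁(x) = E[Y(1)|X=x] and μ₀(x) = E[Y(0)|X=x] for all x in the support, then τ̂(μ₁, μ₀, ê) = E[Y(1) − Y(0)], assuming ignorability and 0 < ê(x) < 1 on the support. -/

import Mathlib

open scoped Classical
open Finset

noncomputable def pr {Ω : Type*} [Fintype Ω] (P : Ω → ℝ) (A : Ω → Prop) : ℝ :=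
  ∑ ω, if A ω then P ω else 0

noncomputable def expec {Ω : Type*} [Fintype Ω] (P : Ω → ℝ) (f : Ω → ℝ) : ℝ :=
  ∑ ω, P ω * f ω

noncomputable def cexp {Ω : Type*} [Fintype Ω] (P : Ω → ℝ) (f : Ω → ℝ) (A : Ω → Prop) : ℝ :=
  (∑ ω, if A ω then P ω * f ω else 0) / pr P A

section aux
variable {Ω 𝒳 : Type*} [Fintype Ω] [Fintype 𝒳]

lemma pr_nonneg' (P : Ω → ℝ) (hP : ∀ ω, 0 ≤ P ω) (A : Ω → Prop) : 0 ≤ pr P A :=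
  Finset.sum_nonneg fun ω _ => by by_cases h : A ω <;> simp [h, hP ω]

lemma fiber_decomp (Y1 Y0 : Ω → ℝ) (F : Ω → ℝ) :
    ∑ ω, F ω = ∑ t ∈ Finset.image (fun ω => (Y1 ω, Y0 ω)) Finset.univ,
      ∑ ω, if (Y1 ω, Y0 ω) = t then F ω else 0 := by
  rw [Finset.sum_comm]
  refine Finset.sum_congr rfl fun ω _ => ?_
  rw [Finset.sum_ite_eq]
  exact (if_pos (Finset.mem_image_of_mem _ (Finset.mem_univ ω))).symm

lemma key_ign (P : Ω → ℝ) (X : Ω → 𝒳) (Z Y1 Y0 : Ω → ℝ)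
    (ign : ∀ (x : 𝒳) (z y1 y0 : ℝ),
      pr P (fun ω => Y1 ω = y1 ∧ Y0 ω = y0 ∧ Z ω = z ∧ X ω = x) * pr P (fun ω => X ω = x)
        = pr P (fun ω => Y1 ω = y1 ∧ Y0 ω = y0 ∧ X ω = x)
            * pr P (fun ω => Z ω = z ∧ X ω = x))
    (x : 𝒳) (z : ℝ) (sel : ℝ → ℝ → ℝ) :
    (∑ ω, if Z ω = z ∧ X ω = x then P ω * sel (Y1 ω) (Y0 ω) else 0) * pr P (fun ω => X ω = x)
      = (∑ ω, if X ω = x then P ω * sel (Y1 ω) (Y0 ω) else 0)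
          * pr P (fun ω => Z ω = z ∧ X ω = x) := by
  classical
  rw [fiber_decomp Y1 Y0 (fun ω => if Z ω = z ∧ X ω = x then P ω * sel (Y1 ω) (Y0 ω) else 0),
      fiber_decomp Y1 Y0 (fun ω => if X ω = x then P ω * sel (Y1 ω) (Y0 ω) else 0),
      Finset.sum_mul, Finset.sum_mul]
  refine Finset.sum_congr rfl fun t _ => ?_
  have h1 : (∑ ω, if (Y1 ω, Y0 ω) = t then (if Z ω = z ∧ X ω = x then P ω * sel (Y1 ω) (Y0 ω) else 0) else 0)
      = sel t.1 t.2 * pr P (fun ω => Y1 ω = t.1 ∧ Y0 ω = t.2 ∧ Z ω = z ∧ X ω = x) := by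
    rw [pr, Finset.mul_sum]
    refine Finset.sum_congr rfl fun ω _ => ?_
    by_cases hp : (Y1 ω, Y0 ω) = t
    · obtain ⟨h1, h2⟩ := Prod.mk.injEq .. ▸ hp
      by_cases hc : Z ω = z ∧ X ω = x <;> simp [hp, hc, h1, h2] <;> ring
    · have : ¬ (Y1 ω = t.1 ∧ Y0 ω = t.2 ∧ Z ω = z ∧ X ω = x) := by
        intro ⟨a, b, _⟩; exact hp (Prod.ext a b)
      simp [hp, this]
  have h2 : (∑ ω, if (Y1 ω, Y0 ω) = t then (if X ω = x then P ω * sel (Y1 ω) (Y0 ω) else 0) else 0)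
      = sel t.1 t.2 * pr P (fun ω => Y1 ω = t.1 ∧ Y0 ω = t.2 ∧ X ω = x) := by
    rw [pr, Finset.mul_sum]
    refine Finset.sum_congr rfl fun ω _ => ?_
    by_cases hp : (Y1 ω, Y0 ω) = t
    · obtain ⟨h1, h2⟩ := Prod.mk.injEq .. ▸ hp
      by_cases hc : X ω = x <;> simp [hp, hc, h1, h2] <;> ring
    · have : ¬ (Y1 ω = t.1 ∧ Y0 ω = t.2 ∧ X ω = x) := by
        intro ⟨a, b, _⟩; exact hp (Prod.ext a b)
      simp [hp, this]
  rw [h1, h2, mul_assoc, mul_assoc, ign x z t.1 t.2]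

lemma expec_split (P : Ω → ℝ) (X : Ω → 𝒳) (f : Ω → ℝ) :
    expec P f = ∑ x, ∑ ω, if X ω = x then P ω * f ω else 0 := by
  classical
  have h : ∀ ω : Ω, P ω * f ω = ∑ x, if X ω = x then P ω * f ω else 0 := by
    intro ω; rw [Finset.sum_ite_eq]; simp
  rw [expec, Finset.sum_congr rfl fun ω _ => h ω, Finset.sum_comm]

end aux

/-- Full double robustness of AIPW: the AIPW functional recovers the ATE
if either the working propensity equals the true propensity, or the outcome models are
the true conditional potential-outcome means. -/
theorem aipw_double_robustness {Ω 𝒳 : Type*} [Fintype Ω] [Fintype 𝒳]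
    (P : Ω → ℝ) (hP : ∀ ω, 0 ≤ P ω) (hP1 : ∑ ω, P ω = 1)
    (X : Ω → 𝒳) (Z : Ω → ℝ) (Y1 Y0 Y : Ω → ℝ)
    (hZ : ∀ ω, Z ω = 0 ∨ Z ω = 1)
    (consistency : ∀ ω, Y ω = Z ω * Y1 ω + (1 - Z ω) * Y0 ω)
    (e : 𝒳 → ℝ)
    (he : ∀ x, e x = pr P (fun ω => Z ω = 1 ∧ X ω = x) / pr P (fun ω => X ω = x))
    (ignorability : ∀ (x : 𝒳) (z y1 y0 : ℝ),
      pr P (fun ω => Y1 ω = y1 ∧ Y0 ω = y0 ∧ Z ω = z ∧ X ω = x) * pr P (fun ω => X ω = x)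
        = pr P (fun ω => Y1 ω = y1 ∧ Y0 ω = y0 ∧ X ω = x)
            * pr P (fun ω => Z ω = z ∧ X ω = x))
    (μ1 μ0 : 𝒳 → ℝ) (eHat : 𝒳 → ℝ)
    (hOverlapHat : ∀ x : 𝒳, 0 < pr P (fun ω => X ω = x) → 0 < eHat x ∧ eHat x < 1)
    (hDR :
      (∀ x : 𝒳, 0 < pr P (fun ω => X ω = x) → eHat x = e x ∧ 0 < e x ∧ e x < 1) ∨
      (∀ x : 𝒳, 0 < pr P (fun ω => X ω = x) →
        μ1 x = cexp P Y1 (fun ω => X ω = x) ∧ μ0 x = cexp P Y0 (fun ω => X ω = x))) :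
    expec P (fun ω => μ1 (X ω) - μ0 (X ω))
      + expec P (fun ω => Z ω * (Y ω - μ1 (X ω)) / eHat (X ω))
      - expec P (fun ω => (1 - Z ω) * (Y ω - μ0 (X ω)) / (1 - eHat (X ω)))
      = expec P (fun ω => Y1 ω - Y0 ω) := by
  classical
  rw [expec_split P X (fun ω => μ1 (X ω) - μ0 (X ω)),
      expec_split P X (fun ω => Z ω * (Y ω - μ1 (X ω)) / eHat (X ω)),
      expec_split P X (fun ω => (1 - Z ω) * (Y ω - μ0 (X ω)) / (1 - eHat (X ω))),
      expec_split P X (fun ω => Y1 ω - Y0 ω),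
      ← Finset.sum_add_distrib, ← Finset.sum_sub_distrib]
  refine Finset.sum_congr rfl fun x _ => ?_
  set p := pr P (fun ω => X ω = x) with hpdef
  set q1 := pr P (fun ω => Z ω = (1:ℝ) ∧ X ω = x) with hq1def
  set q0 := pr P (fun ω => Z ω = (0:ℝ) ∧ X ω = x) with hq0def
  set a1 := ∑ ω, if X ω = x then P ω * Y1 ω else 0 with ha1def
  set a0 := ∑ ω, if X ω = x then P ω * Y0 ω else 0 with ha0def
  set b1 := ∑ ω, if Z ω = (1:ℝ) ∧ X ω = x then P ω * Y1 ω else 0 with hb1def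
  set b0 := ∑ ω, if Z ω = (0:ℝ) ∧ X ω = x then P ω * Y0 ω else 0 with hb0def
  have hS1 : (∑ ω, if X ω = x then P ω * (μ1 (X ω) - μ0 (X ω)) else 0) = (μ1 x - μ0 x) * p := by
    rw [hpdef, pr, Finset.mul_sum]
    refine Finset.sum_congr rfl fun ω _ => ?_
    by_cases hx : X ω = x <;> simp [hx] <;> ring
  have hS2 : (∑ ω, if X ω = x then P ω * (Z ω * (Y ω - μ1 (X ω)) / eHat (X ω)) else 0)
      = (b1 - μ1 x * q1) / eHat x := by
    have step : ∀ ω : Ω, (if X ω = x then P ω * (Z ω * (Y ω - μ1 (X ω)) / eHat (X ω)) else 0)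
        = ((if Z ω = (1:ℝ) ∧ X ω = x then P ω * Y1 ω else 0)
            - μ1 x * (if Z ω = (1:ℝ) ∧ X ω = x then P ω else 0)) / eHat x := by
      intro ω
      rcases hZ ω with h | h <;> by_cases hx : X ω = x <;>
        simp [hx, h, consistency ω] <;> ring
    have hq1' : (∑ ω : Ω, if Z ω = (1:ℝ) ∧ X ω = x then P ω else 0) = q1 := by
      rw [hq1def, pr]
      exact Finset.sum_congr rfl fun ω _ => by
        by_cases h : Z ω = (1:ℝ) ∧ X ω = x <;> simp [h]
    rw [Finset.sum_congr rfl fun ω _ => step ω, ← Finset.sum_div, Finset.sum_sub_distrib,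
        ← Finset.mul_sum, hq1']
  have hS3 : (∑ ω, if X ω = x then P ω * ((1 - Z ω) * (Y ω - μ0 (X ω)) / (1 - eHat (X ω))) else 0)
      = (b0 - μ0 x * q0) / (1 - eHat x) := by
    have step : ∀ ω : Ω, (if X ω = x then P ω * ((1 - Z ω) * (Y ω - μ0 (X ω)) / (1 - eHat (X ω))) else 0)
        = ((if Z ω = (0:ℝ) ∧ X ω = x then P ω * Y0 ω else 0)
            - μ0 x * (if Z ω = (0:ℝ) ∧ X ω = x then P ω else 0)) / (1 - eHat x) := by
      intro ω
      rcases hZ ω with h | h <;> by_cases hx : X ω = x <;>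
        simp [hx, h, consistency ω] <;> ring
    have hq0' : (∑ ω : Ω, if Z ω = (0:ℝ) ∧ X ω = x then P ω else 0) = q0 := by
      rw [hq0def, pr]
      exact Finset.sum_congr rfl fun ω _ => by
        by_cases h : Z ω = (0:ℝ) ∧ X ω = x <;> simp [h]
    rw [Finset.sum_congr rfl fun ω _ => step ω, ← Finset.sum_div, Finset.sum_sub_distrib,
        ← Finset.mul_sum, hq0']
  have hRHS : (∑ ω, if X ω = x then P ω * (Y1 ω - Y0 ω) else 0) = a1 - a0 := by
    rw [ha1def, ha0def, ← Finset.sum_sub_distrib]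
    refine Finset.sum_congr rfl fun ω _ => ?_
    by_cases hx : X ω = x <;> simp [hx] <;> ring
  rw [hS1, hS2, hS3, hRHS]
  have hb1 : b1 * p = a1 * q1 := by
    have := key_ign P X Z Y1 Y0 ignorability x 1 (fun a _ => a)
    simpa [hb1def, ha1def, hq1def, hpdef] using this
  have hb0 : b0 * p = a0 * q0 := by
    have := key_ign P X Z Y1 Y0 ignorability x 0 (fun _ b => b)
    simpa [hb0def, ha0def, hq0def, hpdef] using this
  have hq : q1 + q0 = p := by
    rw [hq1def, hq0def, hpdef, pr, pr, pr, ← Finset.sum_add_distrib]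
    refine Finset.sum_congr rfl fun ω _ => ?_
    rcases hZ ω with h | h <;> by_cases hx : X ω = x <;> simp [h, hx]
  rcases eq_or_lt_of_le (pr_nonneg' P hP (fun ω => X ω = x)) with hp0 | hp
  · -- degenerate case p = 0
    have hz : ∀ ω, X ω = x → P ω = 0 := by
      intro ω hx
      have h0 : (∑ ω, if X ω = x then P ω else 0) = 0 := by
        rw [← pr]; exact hp0.symm
      have := (Finset.sum_eq_zero_iff_of_nonneg
        (fun ω _ => by by_cases h : X ω = x <;> simp [h, hP ω])).mp h0 ω (Finset.mem_univ ω)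
      simpa [hx] using this
    have z1 : a1 = 0 := Finset.sum_eq_zero fun ω _ => by
      by_cases hx : X ω = x
      · simp [hx, hz ω hx]
      · simp [hx]
    have z0 : a0 = 0 := Finset.sum_eq_zero fun ω _ => by
      by_cases hx : X ω = x
      · simp [hx, hz ω hx]
      · simp [hx]
    have zb1 : b1 = 0 := Finset.sum_eq_zero fun ω _ => by
      by_cases hx : X ω = x
      · simp [hx, hz ω hx]
      · simp [hx]
    have zb0 : b0 = 0 := Finset.sum_eq_zero fun ω _ => by
      by_cases hx : X ω = x
      · simp [hx, hz ω hx]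
      · simp [hx]
    have zq1 : q1 = 0 := Finset.sum_eq_zero fun ω _ => by
      by_cases hx : X ω = x
      · simp [hx, hz ω hx]
      · simp [hx]
    have zq0 : q0 = 0 := Finset.sum_eq_zero fun ω _ => by
      by_cases hx : X ω = x
      · simp [hx, hz ω hx]
      · simp [hx]
    have hp0' : p = 0 := hp0.symm
    rw [z1, z0, zb1, zb0, zq1, zq0, hp0']
    simp
  · -- nondegenerate case p > 0
    obtain ⟨hE0, hE1⟩ := hOverlapHat x hp
    have hp' : p ≠ 0 := hp.ne'
    rcases hDR with hcase | hcase
    · obtain ⟨heq, he0, he1⟩ := hcase x hp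
      have hex : e x = q1 / p := he x
      have hq1v : q1 = e x * p := by rw [hex]; field_simp
      have hq1pos : 0 < q1 := by rw [hq1v]; exact mul_pos he0 hp
      have hq0v : q0 = (1 - e x) * p := by
        have : q0 = p - q1 := by linarith
        rw [this, hq1v]; ring
      have hq0pos : 0 < q0 := by
        rw [hq0v]; exact mul_pos (by linarith) hp
      have hb1' : b1 = a1 * q1 / p := by rw [eq_div_iff hp.ne']; exact hb1
      have hb0' : b0 = a0 * q0 / p := by rw [eq_div_iff hp.ne']; exact hb0
      have hEx : eHat x = q1 / p := heq.trans hex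
      have h1E : 1 - eHat x = q0 / p := by
        rw [hEx]
        field_simp
        linarith
      rw [h1E, hEx, hb1', hb0']
      field_simp
      ring
    · obtain ⟨hm1, hm0⟩ := hcase x hp
      rw [cexp] at hm1 hm0
      have hm1' : μ1 x = a1 / p := hm1
      have hm0' : μ0 x = a0 / p := hm0
      have hn1 : b1 - μ1 x * q1 = 0 := by
        rw [hm1', div_mul_eq_mul_div, sub_eq_zero, eq_div_iff hp.ne']
        exact hb1
      have hn0 : b0 - μ0 x * q0 = 0 := by
        rw [hm0', div_mul_eq_mul_div, sub_eq_zero, eq_div_iff hp.ne']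
        exact hb0
      rw [hn1, hn0, hm1', hm0', zero_div, zero_div, add_zero, sub_zero]
      field_simp
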